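/- arXiv:0712.3333 — 5 statements merged into one kernel-verified Lean document; each statement's English description precedes it below -/
import Mathlib

section
/- Every finite simple graph G that is not bipartite contains a strong edge, i.e., there exist an optimal vertex cover V⁰ of G and an edge (i,j) ∈ E with both i ∈ V⁰ and j ∈ V⁰. -/
/-- `S` is a vertex cover of `G`: every edge has at least one endpoint in `S`. -/
def IsVertexCover {V : Type*} (G : SimpleGraph V) (S : Finset V) : Prop :=
  ∀ ⦃a b : V⦄, G.Adj a b → a ∈ S ∨ b ∈ S

/-- `S` is an optimal vertex cover of `G`: a vertex cover of minimum cardinality. -/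
def IsOptimalVertexCover {V : Type*} (G : SimpleGraph V) (S : Finset V) : Prop :=
  IsVertexCover G S ∧ ∀ T : Finset V, IsVertexCover G T → S.card ≤ T.card

/-- Every finite simple graph that is not bipartite (i.e. not 2-colorable) contains a
strong edge: an edge both of whose endpoints belong to some optimal vertex cover. -/
theorem exists_strong_edge_of_not_bipartite {V : Type*} [Fintype V] [DecidableEq V]
    (G : SimpleGraph V) (hG : ¬ G.Colorable 2) :
    ∃ (V0 : Finset V) (i j : V), IsOptimalVertexCover G V0 ∧ G.Adj i j ∧
      i ∈ V0 ∧ j ∈ V0 := by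
  classical
  have hex : ∃ n : ℕ, ∃ S : Finset V, IsVertexCover G S ∧ S.card = n :=
    ⟨(Finset.univ : Finset V).card, Finset.univ,
      fun a b _ => Or.inl (Finset.mem_univ a), rfl⟩
  obtain ⟨S, hS, hScard⟩ := Nat.find_spec hex
  have hopt : IsOptimalVertexCover G S := by
    refine ⟨hS, fun T hT => ?_⟩
    rw [hScard]
    exact Nat.find_le ⟨T, hT, rfl⟩
  by_contra h
  push_neg at h
  apply hG
  refine ⟨SimpleGraph.Coloring.mk (fun v => if v ∈ S then 0 else 1) ?_⟩
  intro a b hab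
  have h2 : ¬(a ∈ S ∧ b ∈ S) := fun ⟨ha, hb⟩ => h S a b hopt hab ha hb
  rcases hS hab with ha | hb
  · have hb : b ∉ S := fun hb => h2 ⟨ha, hb⟩
    simp [ha, hb]
  · have ha : a ∉ S := fun ha => h2 ⟨ha, hb⟩
    simp [ha, hb]
end

section
/- For the complete graph K_n on n ≥ 3 vertices, the optimal value of the extended linear programming relaxation ELP equals 2n/3: the point with all coordinates equal to 2/3 is feasible with objective value 2n/3, and every feasible point x satisfies Σ_{i=1}^n x_i ≥ 2n/3. -/
/-- `x` is feasible for the extended LP relaxation ELP of the vertex cover problem on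
`G`: `x_i + x_j ≥ 1` for every edge, `∑_{i ∈ ω} x_i ≥ s + 1` for every odd cycle `ω`
of `G` with `2s + 1` vertices, and `x_i ≥ 0` for all `i`. -/
def ELPFeasible {V : Type*} [DecidableEq V] (G : SimpleGraph V) (x : V → ℝ) : Prop :=
  (∀ i : V, 0 ≤ x i) ∧
  (∀ ⦃i j : V⦄, G.Adj i j → 1 ≤ x i + x j) ∧
  ∀ (s : ℕ) (v : V) (c : G.Walk v v), c.IsCycle → c.length = 2 * s + 1 →
    (s : ℝ) + 1 ≤ ∑ k ∈ c.support.tail.toFinset, x k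

/-- Triangle constraint extracted from ELP feasibility on the complete graph. -/
lemma elp_triangle_bound {n : ℕ} (x : Fin n → ℝ)
    (h : ELPFeasible (⊤ : SimpleGraph (Fin n)) x)
    {a b c : Fin n} (hab : a ≠ b) (hbc : b ≠ c) (hac : a ≠ c) :
    2 ≤ x a + x b + x c := by
  obtain ⟨-, -, h3⟩ := h
  have hadj1 : (⊤ : SimpleGraph (Fin n)).Adj a b := hab
  have hadj2 : (⊤ : SimpleGraph (Fin n)).Adj b c := hbc
  have hadj3 : (⊤ : SimpleGraph (Fin n)).Adj c a := fun h => hac h.symm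
  let w : (⊤ : SimpleGraph (Fin n)).Walk a a :=
    .cons hadj1 (.cons hadj2 (.cons hadj3 .nil))
  have hcyc : w.IsCycle := by
    rw [SimpleGraph.Walk.isCycle_def]
    refine ⟨?_, by simp [w], ?_⟩
    · rw [SimpleGraph.Walk.isTrail_def]
      simp [w, Sym2.eq_iff, hab, hbc, hac, hab.symm, hbc.symm, hac.symm]
    · simp [w, hab, hbc, hac, hab.symm, hbc.symm, hac.symm]
  have hsum : ∑ k ∈ w.support.tail.toFinset, x k = x b + x c + x a := by
    show ∑ k ∈ [b, c, a].toFinset, x k = _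
    rw [List.toFinset_cons, List.toFinset_cons, List.toFinset_cons, List.toFinset_nil]
    rw [Finset.sum_insert (by simp [hbc, hab.symm]), Finset.sum_insert (by simp [hac.symm])]
    simp; ring
  have := h3 1 a w hcyc rfl
  rw [hsum] at this
  push_cast at this
  linarith

/-- For the complete graph `K_n` (`n ≥ 3`), the optimal value of the extended LP
relaxation ELP equals `2n / 3`: the all-`2/3` point is feasible with objective value
`2n / 3`, and every feasible point has objective value at least `2n / 3`. -/
theorem completeGraph_elp_value (n : ℕ) (hn : 3 ≤ n) :
    ELPFeasible (⊤ : SimpleGraph (Fin n)) (fun _ => (2 : ℝ) / 3) ∧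
    (∑ i : Fin n, (2 : ℝ) / 3) = 2 * n / 3 ∧
    ∀ x : Fin n → ℝ, ELPFeasible (⊤ : SimpleGraph (Fin n)) x →
      2 * (n : ℝ) / 3 ≤ ∑ i : Fin n, x i := by
  refine ⟨?_, ?_, ?_⟩
  · -- feasibility of the all-2/3 point
    refine ⟨fun i => by norm_num, fun i j _ => by norm_num, fun s v c hc hl => ?_⟩
    have hcard : c.support.tail.toFinset.card = 2 * s + 1 := by
      rw [List.toFinset_card_of_nodup hc.support_nodup, List.length_tail,
        SimpleGraph.Walk.length_support, hl]
      simp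
    have hs : 1 ≤ s := by have h3 := hc.three_le_length; omega
    rw [Finset.sum_const, hcard]
    have hcast : ((2 * s + 1 : ℕ) : ℝ) * (2 / 3) = (2 * (s : ℝ) + 1) * (2 / 3) := by
      push_cast; ring
    rw [nsmul_eq_mul, hcast]
    have : (1 : ℝ) ≤ s := by exact_mod_cast hs
    linarith
  · -- objective value of the all-2/3 point
    rw [Finset.sum_const, Finset.card_univ, Fintype.card_fin, nsmul_eq_mul]
    ring
  · -- lower bound for every feasible point
    obtain ⟨m, rfl⟩ : ∃ m, n = m + 3 := ⟨n - 3, by omega⟩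
    intro x hx
    have h10 : (1 : Fin (m + 3)) ≠ 0 := by simp [Fin.ext_iff]
    have h20 : (2 : Fin (m + 3)) ≠ 0 := by simp [Fin.ext_iff, Fin.val_two, Nat.mod_eq_of_lt (show 2 < m + 3 by omega)]
    have h12 : (1 : Fin (m + 3)) ≠ 2 := by simp [Fin.ext_iff, Fin.val_two, Nat.mod_eq_of_lt (show 2 < m + 3 by omega)]
    have tri : ∀ i : Fin (m + 3), 2 ≤ x i + x (i + 1) + x (i + 2) := fun i => by
      refine elp_triangle_bound x hx ?_ ?_ ?_
      · intro h; exact h10 ((left_eq_add).mp h)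
      · intro h; exact h12 (add_left_cancel h)
      · intro h; exact h20 ((left_eq_add).mp h)
    have h1 : ∑ i : Fin (m + 3), x (i + 1) = ∑ i : Fin (m + 3), x i :=
      (Equiv.addRight (1 : Fin (m + 3))).bijective.sum_comp x
    have h2 : ∑ i : Fin (m + 3), x (i + 2) = ∑ i : Fin (m + 3), x i :=
      (Equiv.addRight (2 : Fin (m + 3))).bijective.sum_comp x
    have key : 2 * ((m + 3 : ℕ) : ℝ) ≤ ∑ i : Fin (m + 3), (x i + x (i + 1) + x (i + 2)) := by
      calc 2 * ((m + 3 : ℕ) : ℝ) = ∑ _i : Fin (m + 3), (2 : ℝ) := by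
            rw [Finset.sum_const, Finset.card_univ, Fintype.card_fin, nsmul_eq_mul]; ring
        _ ≤ _ := Finset.sum_le_sum fun i _ => tri i
    rw [Finset.sum_add_distrib, Finset.sum_add_distrib, h1, h2] at key
    linarith
end

section
/- For the complete graph K_n on n ≥ 3 vertices and any edge (r,s), the optimal value of the restricted extended LP relaxation RELP(r,s) equals n−1: every feasible point x satisfies Σ_{i=1}^n x_i ≥ n−1, and the incidence vector of the vertex cover V \ {s} (which has x_r = 1, x_s = 0, x_k = 1 for k ≠ r,s) is feasible with objective value n−1. -/
/-- `x` is feasible for the restricted extended LP relaxation RELP(r,s) on `G`: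
`x_i + x_j ≥ 1` for every edge `(i,j) ∈ E \ {(r,s)}`, `x_r + x_s = 1`, the odd-cycle
inequalities, and `x_i ≥ 0` for all `i`. -/
def RELPFeasible {V : Type*} [DecidableEq V] (G : SimpleGraph V) (r s : V)
    (x : V → ℝ) : Prop :=
  (∀ i : V, 0 ≤ x i) ∧
  (∀ ⦃i j : V⦄, G.Adj i j → ¬(i = r ∧ j = s) → ¬(i = s ∧ j = r) → 1 ≤ x i + x j) ∧
  x r + x s = 1 ∧
  ∀ (m : ℕ) (v : V) (c : G.Walk v v), c.IsCycle → c.length = 2 * m + 1 →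
    (m : ℝ) + 1 ≤ ∑ k ∈ c.support.tail.toFinset, x k

/-- For the complete graph `K_n` (`n ≥ 3`) and any edge `(r,s)`, the optimal value of
RELP(r,s) equals `n - 1`: every feasible point has objective value at least `n - 1`,
and the incidence vector of the vertex cover `V \ {s}` (with `x_r = 1`, `x_s = 0`,
`x_k = 1` for `k ≠ r, s`) is feasible with objective value `n - 1`. -/
theorem completeGraph_relp_value (n : ℕ) (hn : 3 ≤ n) (r s : Fin n) (hrs : r ≠ s) :
    (∀ x : Fin n → ℝ, RELPFeasible (⊤ : SimpleGraph (Fin n)) r s x →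
      (n : ℝ) - 1 ≤ ∑ i : Fin n, x i) ∧
    RELPFeasible (⊤ : SimpleGraph (Fin n)) r s (fun k => if k = s then 0 else 1) ∧
    (∑ i : Fin n, (if i = s then (0 : ℝ) else 1)) = n - 1 := by
  refine ⟨?_, ?_, ?_⟩
  · rintro x ⟨hpos, hedge, hrs1, hcyc⟩
    have hk : ∀ k : Fin n, k ≠ r → k ≠ s → 1 ≤ x k := by
      intro k hkr hks
      have h1 : (⊤ : SimpleGraph (Fin n)).Adj r s := by simpa using hrs
      have h2 : (⊤ : SimpleGraph (Fin n)).Adj s k := by simpa using (Ne.symm hks)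
      have h3 : (⊤ : SimpleGraph (Fin n)).Adj k r := by simpa using hkr
      set c : (⊤ : SimpleGraph (Fin n)).Walk r r :=
        SimpleGraph.Walk.cons h1 (SimpleGraph.Walk.cons h2
          (SimpleGraph.Walk.cons h3 SimpleGraph.Walk.nil)) with hc
      have hcyc3 : c.IsCycle := by
        rw [SimpleGraph.Walk.isCycle_def]
        refine ⟨?_, by simp [hc], ?_⟩
        · rw [SimpleGraph.Walk.isTrail_def]
          simp [hc, Sym2.eq_iff]
          exact ⟨⟨⟨fun _ h => hks h.symm, fun h => hkr h.symm⟩,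
            fun _ h => hrs h.symm, fun h => hks h.symm⟩,
            fun _ h => hkr h, fun h => hrs h.symm⟩
        · simp [hc]
          exact ⟨⟨fun h => hks h.symm, fun h => hrs h.symm⟩, hkr⟩
      have hlen : c.length = 2 * 1 + 1 := by simp [hc]
      have := hcyc 1 r c hcyc3 hlen
      have hT : c.support.tail.toFinset = {s, k, r} := by
        simp [hc]
      rw [hT] at this
      have hsum : ∑ i ∈ ({s, k, r} : Finset (Fin n)), x i = x s + x k + x r := by
        rw [Finset.sum_insert (by simp [hks.symm, hrs.symm]),
          Finset.sum_insert (by simpa using hkr), Finset.sum_singleton]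
        ring
      rw [hsum] at this
      push_cast at this
      linarith
    have hsub : ({r, s} : Finset (Fin n)) ⊆ Finset.univ := Finset.subset_univ _
    have hsplit : ∑ i ∈ ({r, s} : Finset (Fin n)), x i
        + ∑ i ∈ (Finset.univ \ {r, s}), x i = ∑ i : Fin n, x i := by
      rw [add_comm]; exact Finset.sum_sdiff hsub
    have hpair : ∑ i ∈ ({r, s} : Finset (Fin n)), x i = 1 := by
      rw [Finset.sum_pair hrs]; exact hrs1
    have hcard : (Finset.univ \ ({r, s} : Finset (Fin n))).card = n - 2 := by
      rw [Finset.card_sdiff_of_subset hsub, Finset.card_pair hrs, Finset.card_univ, Fintype.card_fin]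
    have hlow : ((n : ℝ) - 2) ≤ ∑ i ∈ (Finset.univ \ ({r, s} : Finset (Fin n))), x i := by
      have := Finset.card_nsmul_le_sum (Finset.univ \ ({r, s} : Finset (Fin n))) x 1
        (by intro i hi; simp at hi; exact hk i hi.1 hi.2)
      rw [hcard] at this
      have h2 : ((n - 2 : ℕ) : ℝ) = (n : ℝ) - 2 := by
        have : 2 ≤ n := by omega
        push_cast [this]; ring
      simpa [nsmul_eq_mul, h2] using this
    linarith
  · refine ⟨fun i => by positivity, ?_, by simp [hrs], ?_⟩
    · intro i j hij _ _
      have hij' : i ≠ j := hij.ne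
      simp only []
      split_ifs with h1 h2
      · exact absurd (h1.trans h2.symm) hij'
      · norm_num
      · norm_num
      · norm_num
    · intro m v c hc hlen
      set T := c.support.tail.toFinset with hT
      have hnd : c.support.tail.Nodup := hc.support_nodup
      have hcard : T.card = 2 * m + 1 := by
        rw [hT, List.toFinset_card_of_nodup hnd, List.length_tail,
          SimpleGraph.Walk.length_support, hlen]
        omega
      have hm : 1 ≤ m := by
        have := hc.three_le_length
        omega
      have hsum : ∑ k ∈ T, (if k = s then (0 : ℝ) else 1)
          = T.card - (if s ∈ T then (1 : ℝ) else 0) := by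
        have : ∀ k ∈ T, (if k = s then (0 : ℝ) else 1)
            = 1 - (if k = s then (1 : ℝ) else 0) := by
          intro k _; split_ifs <;> ring
        rw [Finset.sum_congr rfl this, Finset.sum_sub_distrib, Finset.sum_const,
          Finset.sum_ite_eq' T s (fun _ => (1 : ℝ))]
        simp
      rw [hsum, hcard]
      have : ((2 * m + 1 : ℕ) : ℝ) = 2 * m + 1 := by push_cast; ring
      rw [this]
      split_ifs <;> [skip; skip] <;>
        · have : (1 : ℝ) ≤ m := by exact_mod_cast hm
          linarith
  · have : ∀ i : Fin n, (if i = s then (0 : ℝ) else 1) = 1 - (if i = s then (1 : ℝ) else 0) := by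
      intro i; split_ifs <;> ring
    rw [Finset.sum_congr rfl (fun i _ => this i), Finset.sum_sub_distrib, Finset.sum_const,
      Finset.sum_ite_eq' Finset.univ s (fun _ => (1 : ℝ))]
    simp
end

section
/- Let n ≥ 3 and let (i,j) be any edge of the complete graph K_n. Every optimal extreme point x⁰ of the feasible region of RELP(i,j) on K_n is a 0–1 vector, and the set {k : x⁰_k = 1} is an optimal vertex cover of K_n (of cardinality n−1). -/
/-- `S` is a vertex cover of `G`: every edge has at least one endpoint in `S`. -/
def IsVertexCoverSet {V : Type*} (G : SimpleGraph V) (S : Set V) : Prop :=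
  ∀ ⦃a b : V⦄, G.Adj a b → a ∈ S ∨ b ∈ S

/-- `S` is an optimal vertex cover of `G`: a vertex cover of minimum cardinality. -/
def IsOptimalVertexCoverSet {V : Type*} (G : SimpleGraph V) (S : Set V) : Prop :=
  IsVertexCoverSet G S ∧ ∀ T : Set V, IsVertexCoverSet G T → S.ncard ≤ T.ncard

open SimpleGraph in
lemma relp_triangle {n : ℕ} (i j k : Fin n) (hij : i ≠ j) (hik : i ≠ k) (hjk : j ≠ k)
    (x : Fin n → ℝ) (hx : RELPFeasible (⊤ : SimpleGraph (Fin n)) i j x) :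
    2 ≤ x i + x j + x k := by
  have a1 : (⊤ : SimpleGraph (Fin n)).Adj i j := by simp [hij]
  have a2 : (⊤ : SimpleGraph (Fin n)).Adj j k := by simp [hjk]
  have a3 : (⊤ : SimpleGraph (Fin n)).Adj k i := by simp [hik.symm]
  set c : (⊤ : SimpleGraph (Fin n)).Walk i i :=
    Walk.cons a1 (Walk.cons a2 (Walk.cons a3 Walk.nil)) with hc
  have hcyc : c.IsCycle := by
    rw [Walk.isCycle_def]
    refine ⟨?_, by simp [hc], ?_⟩
    · simp [hc, Walk.isTrail_def, Sym2.eq, Sym2.rel_iff', hij, hik, hjk,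
        hij.symm, hik.symm, hjk.symm]
    · simp [hc, hjk, hij.symm, hik.symm]
  have hlen : c.length = 2 * 1 + 1 := by simp [hc]
  have h := hx.2.2.2 1 i c hcyc hlen
  have hsupp : c.support.tail.toFinset = {i, j, k} := by
    ext a; simp [hc]; tauto
  rw [hsupp] at h
  have hsum : ∑ a ∈ ({i, j, k} : Finset (Fin n)), x a = x i + x j + x k := by
    rw [Finset.sum_insert (by simp [hij, hik]), Finset.sum_insert (by simp [hjk]),
      Finset.sum_singleton, add_assoc]
  rw [hsum] at h
  push_cast at h
  linarith


open SimpleGraph in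
lemma relp_feasible_of {n : ℕ} (i j : Fin n) (hij : i ≠ j) (y : Fin n → ℝ)
    (h0 : ∀ k, 0 ≤ y k) (h1 : y i + y j = 1)
    (h2 : ∀ k, k ≠ i → k ≠ j → y k = 1) :
    RELPFeasible (⊤ : SimpleGraph (Fin n)) i j y := by
  refine ⟨h0, ?_, h1, ?_⟩
  · intro a b hab hn1 hn2
    have hab' : a ≠ b := hab.ne
    by_cases ha : a = i
    · subst ha
      have hbj : b ≠ j := fun hbj => hn1 ⟨rfl, hbj⟩
      rw [h2 b (Ne.symm hab') hbj]
      have := h0 a; linarith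
    · by_cases ha2 : a = j
      · subst ha2
        have hbi : b ≠ i := fun hbi => hn2 ⟨rfl, hbi⟩
        rw [h2 b hbi (Ne.symm hab')]
        have := h0 a; linarith
      · rw [h2 a ha ha2]
        have := h0 b; linarith
  · intro m v c hcyc hlen
    classical
    set S := c.support.tail.toFinset with hS
    have hcard : S.card = 2 * m + 1 := by
      rw [hS, List.toFinset_card_of_nodup hcyc.2]
      rw [List.length_tail, Walk.length_support, hlen]
      omega
    have hm : 1 ≤ m := by
      have h3 := hcyc.three_le_length
      omega
    have hsplit : ∑ k ∈ S ∩ {i, j}, y k + ∑ k ∈ S \ {i, j}, y k = ∑ k ∈ S, y k :=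
      Finset.sum_inter_add_sum_sdiff S {i, j} y
    have hsd : ∑ k ∈ S \ {i, j}, y k = ((S \ {i, j}).card : ℝ) := by
      rw [Finset.sum_congr rfl (fun k hk => ?_), Finset.sum_const, nsmul_eq_mul, mul_one]
      simp only [Finset.mem_sdiff, Finset.mem_insert, Finset.mem_singleton] at hk
      exact h2 k (fun h => hk.2 (Or.inl h)) (fun h => hk.2 (Or.inr h))
    have hin : ((S ∩ {i, j}).card : ℝ) - 1 ≤ ∑ k ∈ S ∩ {i, j}, y k := by
      by_cases hi : i ∈ S <;> by_cases hj : j ∈ S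
      · have he : S ∩ {i, j} = {i, j} := by
          ext a; simp only [Finset.mem_inter, Finset.mem_insert, Finset.mem_singleton]
          constructor
          · tauto
          · rintro (rfl | rfl) <;> simp [hi, hj]
        rw [he, Finset.sum_pair hij, h1, Finset.card_pair hij]
        norm_num
      · have he : S ∩ {i, j} = {i} := by
          ext a; simp only [Finset.mem_inter, Finset.mem_insert, Finset.mem_singleton]
          constructor
          · rintro ⟨haS, rfl | rfl⟩ <;> first | rfl | exact absurd haS hj
          · rintro rfl; exact ⟨hi, Or.inl rfl⟩
        rw [he, Finset.sum_singleton, Finset.card_singleton]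
        push_cast
        have := h0 i; linarith
      · have he : S ∩ {i, j} = {j} := by
          ext a; simp only [Finset.mem_inter, Finset.mem_insert, Finset.mem_singleton]
          constructor
          · rintro ⟨haS, rfl | rfl⟩ <;> first | exact absurd haS hi | rfl
          · rintro rfl; exact ⟨hj, Or.inr rfl⟩
        rw [he, Finset.sum_singleton, Finset.card_singleton]
        push_cast
        have := h0 j; linarith
      · have he : S ∩ {i, j} = ∅ := by
          ext a; simp only [Finset.mem_inter, Finset.mem_insert, Finset.mem_singleton,
            Finset.notMem_empty, iff_false]
          rintro ⟨haS, rfl | rfl⟩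
          exacts [hi haS, hj haS]
        rw [he]; simp
    have hcards : (S ∩ {i, j}).card + (S \ {i, j}).card = S.card :=
      Finset.card_inter_add_card_sdiff S {i, j}
    have : (S.card : ℝ) - 1 ≤ ∑ k ∈ S, y k := by
      rw [← hsplit, hsd]
      have : ((S ∩ {i, j}).card : ℝ) + ((S \ {i, j}).card : ℝ) = (S.card : ℝ) := by
        exact_mod_cast congrArg Nat.cast hcards
      linarith
    rw [hcard] at this
    push_cast at this ⊢
    have : (1 : ℝ) ≤ (m : ℝ) := by exact_mod_cast hm
    linarith [‹(2 * (m:ℝ) + 1) - 1 ≤ ∑ k ∈ S, y k›]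

open SimpleGraph in
lemma compl_singleton_cover {n : ℕ} (hn : 3 ≤ n) (v : Fin n) :
    IsOptimalVertexCoverSet (⊤ : SimpleGraph (Fin n)) ({v}ᶜ : Set (Fin n)) ∧
    ({v}ᶜ : Set (Fin n)).ncard = n - 1 := by
  have hcompl : ∀ (T : Set (Fin n)), T.ncard + Tᶜ.ncard = n := by
    intro T
    have := Set.ncard_add_ncard_compl T
    simpa using this
  have hncard : ({v}ᶜ : Set (Fin n)).ncard = n - 1 := by
    have h := hcompl ({v}ᶜ : Set (Fin n))
    rw [compl_compl, Set.ncard_singleton] at h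
    omega
  refine ⟨⟨?_, ?_⟩, hncard⟩
  · intro a b hab
    by_contra h
    push_neg at h
    simp only [Set.mem_compl_iff, Set.mem_singleton_iff, not_not] at h
    exact hab.ne (h.1.trans h.2.symm)
  · intro T hT
    have hsub : Tᶜ.Subsingleton := by
      intro a ha b hb
      by_contra hab
      have : (⊤ : SimpleGraph (Fin n)).Adj a b := by simpa using hab
      rcases hT this with h | h
      exacts [ha h, hb h]
    have h1 : Tᶜ.ncard ≤ 1 := by
      rcases hsub.eq_empty_or_singleton with h | ⟨a, h⟩
      · simp [h]
      · simp [h]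
    have := hcompl T
    omega


/-- For `n ≥ 3` and any edge `(i,j)` of `K_n`, every optimal extreme point `x⁰` of the
feasible region of RELP(i,j) on `K_n` is a 0–1 vector, and `{k : x⁰_k = 1}` is an
optimal vertex cover of `K_n`, of cardinality `n - 1`. -/
theorem completeGraph_relp_extremePoint (n : ℕ) (hn : 3 ≤ n) (i j : Fin n)
    (hij : i ≠ j) (x0 : Fin n → ℝ)
    (hext : x0 ∈ Set.extremePoints ℝ
      {x : Fin n → ℝ | RELPFeasible (⊤ : SimpleGraph (Fin n)) i j x})
    (hopt : ∀ y : Fin n → ℝ, RELPFeasible (⊤ : SimpleGraph (Fin n)) i j y →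
      ∑ k : Fin n, x0 k ≤ ∑ k : Fin n, y k) :
    (∀ k : Fin n, x0 k = 0 ∨ x0 k = 1) ∧
    IsOptimalVertexCoverSet (⊤ : SimpleGraph (Fin n)) {k : Fin n | x0 k = 1} ∧
    {k : Fin n | x0 k = 1}.ncard = n - 1 := by
  classical
  obtain ⟨hfeas, hext2⟩ := hext
  simp only [Set.mem_setOf_eq] at hfeas
  obtain ⟨h0, hedge, hsum1, hcyc⟩ := hfeas
  -- every k outside {i,j} has x0 k ≥ 1
  have hone : ∀ k : Fin n, k ≠ i → k ≠ j → 1 ≤ x0 k := by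
    intro k hki hkj
    have := relp_triangle i j k hij (Ne.symm hki) (Ne.symm hkj) x0 ⟨h0, hedge, hsum1, hcyc⟩
    linarith
  -- witness
  set w : Fin n → ℝ := fun k => if k = i then 0 else 1 with hw
  have hwfeas : RELPFeasible (⊤ : SimpleGraph (Fin n)) i j w :=
    relp_feasible_of i j hij w
      (fun k => by by_cases h : k = i <;> simp [hw, h])
      (by simp [hw, hij.symm])
      (fun k hki hkj => by simp [hw, hki])
  have hwsum : ∑ k : Fin n, w k = (n : ℝ) - 1 := by
    rw [← Finset.sum_erase_add _ _ (Finset.mem_univ i)]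
    have h1 : ∑ k ∈ Finset.univ.erase i, w k = ((Finset.univ.erase i).card : ℝ) := by
      rw [Finset.sum_congr rfl (fun k hk => ?_), Finset.sum_const, nsmul_eq_mul, mul_one]
      simp only [Finset.mem_erase, Finset.mem_univ, and_true] at hk
      simp [hw, hk]
    rw [h1, Finset.card_erase_of_mem (Finset.mem_univ i)]
    simp only [hw, if_pos rfl, add_zero, Finset.card_univ, Fintype.card_fin]
    rw [Nat.cast_sub (by omega : 1 ≤ n)]
    norm_num
  have hle : ∑ k : Fin n, x0 k ≤ (n : ℝ) - 1 := hwsum ▸ hopt w hwfeas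
  -- decompose the sum of x0
  set E : Finset (Fin n) := (Finset.univ.erase i).erase j with hE
  have hjmem : j ∈ Finset.univ.erase i := by simp [hij.symm]
  have hdecomp : ∑ k ∈ E, x0 k + x0 j + x0 i = ∑ k : Fin n, x0 k := by
    rw [hE, Finset.sum_erase_add _ _ hjmem, Finset.sum_erase_add _ _ (Finset.mem_univ i)]
  have hEmem : ∀ k ∈ E, k ≠ i ∧ k ≠ j := by
    intro k hk
    simp only [hE, Finset.mem_erase, Finset.mem_univ, and_true] at hk
    exact ⟨hk.2, hk.1⟩
  have hEcard : (E.card : ℝ) = (n : ℝ) - 2 := by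
    have hc : E.card = n - 2 := by
      rw [hE, Finset.card_erase_of_mem hjmem, Finset.card_erase_of_mem (Finset.mem_univ i),
        Finset.card_univ, Fintype.card_fin]
      omega
    rw [hc, Nat.cast_sub (by omega : 2 ≤ n)]
    norm_num
  have hEge : ∀ k ∈ E, 1 ≤ x0 k := fun k hk => hone k (hEmem k hk).1 (hEmem k hk).2
  have hEsum_ge : (E.card : ℝ) ≤ ∑ k ∈ E, x0 k := by
    calc (E.card : ℝ) = ∑ _k ∈ E, (1:ℝ) := by rw [Finset.sum_const, nsmul_eq_mul, mul_one]
    _ ≤ ∑ k ∈ E, x0 k := Finset.sum_le_sum hEge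
  have hEsum_le : ∑ k ∈ E, x0 k ≤ (E.card : ℝ) := by
    rw [hEcard]; linarith [hdecomp, hsum1, hle]
  have hall1 : ∀ k : Fin n, k ≠ i → k ≠ j → x0 k = 1 := by
    intro k hki hkj
    have hkE : k ∈ E := by simp [hE, hki, hkj]
    have hz : ∑ k ∈ E, (x0 k - 1) = 0 := by
      rw [Finset.sum_sub_distrib, Finset.sum_const, nsmul_eq_mul, mul_one]
      linarith
    have := (Finset.sum_eq_zero_iff_of_nonneg
      (fun k hk => sub_nonneg.2 (hEge k hk))).1 hz k hkE
    linarith [sub_eq_zero.1 this]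
  -- extreme point forces x0 i ∈ {0,1}
  have hi01 : x0 i = 0 ∨ x0 i = 1 := by
    by_contra h
    push_neg at h
    obtain ⟨hne0, hne1⟩ := h
    have hipos : 0 < x0 i := (h0 i).lt_of_ne (Ne.symm hne0)
    have hile : x0 i ≤ 1 := by have := h0 j; linarith
    have hilt : x0 i < 1 := hile.lt_of_ne hne1
    have hjpos : 0 < x0 j := by linarith
    set ε : ℝ := min (x0 i) (x0 j) with hε
    have hεpos : 0 < ε := lt_min hipos hjpos
    have hεi : ε ≤ x0 i := min_le_left _ _
    have hεj : ε ≤ x0 j := min_le_right _ _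
    set y1 : Fin n → ℝ := fun k => if k = i then x0 i + ε else if k = j then x0 j - ε else 1
    set y2 : Fin n → ℝ := fun k => if k = i then x0 i - ε else if k = j then x0 j + ε else 1
    have hy1 : RELPFeasible (⊤ : SimpleGraph (Fin n)) i j y1 :=
      relp_feasible_of i j hij y1
        (fun k => by
          by_cases h1 : k = i
          · simp only [y1, h1, if_pos rfl]; linarith
          · by_cases h2 : k = j
            · subst h2; simp [y1, hij.symm]; linarith
            · simp [y1, h1, h2])
        (by simp [y1, hij.symm]; linarith [hsum1])
        (fun k hki hkj => by simp [y1, hki, hkj])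
    have hy2 : RELPFeasible (⊤ : SimpleGraph (Fin n)) i j y2 :=
      relp_feasible_of i j hij y2
        (fun k => by
          by_cases h1 : k = i
          · simp only [y2, h1, if_pos rfl]; linarith
          · by_cases h2 : k = j
            · subst h2; simp [y2, hij.symm]; linarith
            · simp [y2, h1, h2])
        (by simp [y2, hij.symm]; linarith [hsum1])
        (fun k hki hkj => by simp [y2, hki, hkj])
    have hmid : x0 ∈ openSegment ℝ y1 y2 := by
      refine ⟨1/2, 1/2, by norm_num, by norm_num, by norm_num, ?_⟩
      funext k
      simp only [Pi.add_apply, Pi.smul_apply, smul_eq_mul]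
      by_cases h1 : k = i
      · subst h1; simp only [y1, y2, if_pos rfl]; ring
      · by_cases h2 : k = j
        · subst h2; simp [y1, y2, h1]; ring
        · simp only [y1, y2, if_neg h1, if_neg h2]
          rw [hall1 k h1 h2]; ring
    have := hext2 hy1 hy2 hmid
    have hi1 : y1 i = x0 i := congrFun this i
    simp only [y1, if_pos rfl] at hi1
    linarith
  -- the set {k | x0 k = 1} is the complement of a singleton
  have hset : ∃ v : Fin n, {k : Fin n | x0 k = 1} = ({v}ᶜ : Set (Fin n)) := by
    rcases hi01 with h | h
    · refine ⟨i, ?_⟩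
      ext k
      simp only [Set.mem_setOf_eq, Set.mem_compl_iff, Set.mem_singleton_iff]
      constructor
      · rintro hk rfl; rw [h] at hk; norm_num at hk
      · intro hk
        by_cases hkj : k = j
        · subst hkj; linarith
        · exact hall1 k hk hkj
    · refine ⟨j, ?_⟩
      ext k
      simp only [Set.mem_setOf_eq, Set.mem_compl_iff, Set.mem_singleton_iff]
      constructor
      · rintro hk rfl; linarith
      · intro hk
        by_cases hki : k = i
        · subst hki; exact h
        · exact hall1 k hki hk
  obtain ⟨v, hv⟩ := hset
  have hcover := compl_singleton_cover hn v
  refine ⟨?_, hv ▸ hcover.1, hv ▸ hcover.2⟩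
  intro k
  by_cases hki : k = i
  · subst hki; exact hi01
  · by_cases hkj : k = j
    · subst hkj
      rcases hi01 with h | h
      · right; linarith
      · left; linarith
    · right; exact hall1 k hki hkj
end

section
/- Let G = (V,E) be a finite simple graph and let P = {x ∈ ℝ^V : x_i + x_j ≥ 1 for every edge (i,j) ∈ E, and x_i ≥ 0 for all i ∈ V} be the feasible region of the LP relaxation of the vertex cover problem. Then every extreme point x* of P satisfies x*_i ∈ {0, 1/2, 1} for all i ∈ V. -/
/-- Every extreme point of the feasible region
`P = {x : x_i + x_j ≥ 1 for every edge (i,j), x_i ≥ 0 for all i}` of the LP relaxation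
of the vertex cover problem on a finite simple graph `G` is half-integral: each of its
coordinates is `0`, `1/2`, or `1`. -/
theorem lp_extremePoint_half_integral {V : Type*} [Fintype V] (G : SimpleGraph V)
    (x : V → ℝ)
    (hx : x ∈ Set.extremePoints ℝ
      {y : V → ℝ | (∀ i : V, 0 ≤ y i) ∧ ∀ ⦃i j : V⦄, G.Adj i j → 1 ≤ y i + y j}) :
    ∀ i : V, x i = 0 ∨ x i = 1 / 2 ∨ x i = 1 := by
  classical
  intro i
  by_contra hcon
  push_neg at hcon
  obtain ⟨h0, hhalf, h1⟩ := hcon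
  obtain ⟨⟨hnn, hedge⟩, hext⟩ := hx
  set d : V → ℝ := fun j =>
    if x j ≤ 1/2 then (if x j = 0 ∨ x j = 1/2 then 0 else -1)
    else (if x j = 1 then 0 else 1) with hd
  have hcases : ∀ j, (d j = -1 ∧ 0 < x j ∧ x j < 1/2) ∨
      (d j = 0 ∧ (x j = 0 ∨ x j = 1/2 ∨ x j = 1)) ∨
      (d j = 1 ∧ 1/2 < x j ∧ x j ≠ 1) := by
    intro j
    have hnnj := hnn j
    simp only [hd]
    split_ifs with ha hb hc
    · right; left
      refine ⟨rfl, ?_⟩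
      rcases hb with hb | hb
      · exact Or.inl hb
      · exact Or.inr (Or.inl hb)
    · left
      push_neg at hb
      refine ⟨rfl, lt_of_le_of_ne hnnj (Ne.symm hb.1), lt_of_le_of_ne ha hb.2⟩
    · right; left; exact ⟨rfl, Or.inr (Or.inr hc)⟩
    · right; right
      exact ⟨rfl, lt_of_not_ge ha, hc⟩
  have hdi : d i ≠ 0 := by
    rcases hcases i with ⟨h, _⟩ | ⟨h, hx'⟩ | ⟨h, _⟩
    · rw [h]; norm_num
    · rcases hx' with hx' | hx' | hx'
      · exact absurd hx' h0
      · exact absurd hx' hhalf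
      · exact absurd hx' h1
    · rw [h]; norm_num
  have hpos : ∀ j, d j ≠ 0 → 0 < x j := by
    intro j hj
    rcases hcases j with ⟨_, h, _⟩ | ⟨h, _⟩ | ⟨_, h, _⟩
    · exact h
    · exact absurd h hj
    · linarith
  have hbd : ∀ j, -1 ≤ d j ∧ d j ≤ 1 := by
    intro j
    rcases hcases j with ⟨h, _⟩ | ⟨h, _⟩ | ⟨h, _⟩ <;> rw [h] <;> norm_num
  have hstrict : ∀ j k, G.Adj j k → d j + d k ≠ 0 → 1 < x j + x k := by
    intro j k hjk hs
    have hsum := hedge hjk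
    rcases hcases j with ⟨hj, hj1, hj2⟩ | ⟨hj, hj1⟩ | ⟨hj, hj1, hj2⟩ <;>
      rcases hcases k with ⟨hk, hk1, hk2⟩ | ⟨hk, hk1⟩ | ⟨hk, hk1, hk2⟩
    · linarith
    · rcases hk1 with h | h | h
      · linarith
      · linarith
      · linarith
    · exact absurd (by rw [hj, hk]; ring) hs
    · rcases hj1 with h | h | h
      · linarith
      · linarith
      · linarith
    · exact absurd (by rw [hj, hk]; ring) hs
    · rcases hj1 with h | h | h
      · rcases lt_or_gt_of_ne hk2 with h' | h' <;> linarith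
      · linarith
      · linarith
    · exact absurd (by rw [hj, hk]; ring) hs
    · rcases hk1 with h | h | h
      · rcases lt_or_gt_of_ne hj2 with h' | h' <;> linarith
      · linarith
      · linarith
    · linarith
  -- choose ε
  set A : Finset V := Finset.univ.filter (fun j => d j ≠ 0) with hA
  have hAne : A.Nonempty := ⟨i, by simp [hA, hdi]⟩
  set B : Finset (V × V) :=
    Finset.univ.filter (fun p : V × V => G.Adj p.1 p.2 ∧ d p.1 + d p.2 ≠ 0) with hB
  set εv : ℝ := A.inf' hAne x with hεv
  set εe : ℝ := if hBne : B.Nonempty then B.inf' hBne (fun p => (x p.1 + x p.2 - 1)/2) else 1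
    with hεe
  set ε : ℝ := min εv εe with hε
  have hεvpos : 0 < εv := by
    rw [hεv, Finset.lt_inf'_iff]
    intro j hj
    rw [hA, Finset.mem_filter] at hj
    exact hpos j hj.2
  have hεepos : 0 < εe := by
    rw [hεe]
    split_ifs with hBne
    · rw [Finset.lt_inf'_iff]
      intro p hp
      rw [hB, Finset.mem_filter] at hp
      have := hstrict p.1 p.2 hp.2.1 hp.2.2
      linarith
    · norm_num
  have hεpos : 0 < ε := lt_min hεvpos hεepos
  have hεle : ∀ j, d j ≠ 0 → ε ≤ x j := by
    intro j hj
    calc ε ≤ εv := min_le_left _ _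
      _ ≤ x j := Finset.inf'_le _ (by simp [hA, hj])
  have hεedge : ∀ j k, G.Adj j k → d j + d k ≠ 0 → ε ≤ (x j + x k - 1)/2 := by
    intro j k hjk hs
    have hmem : (j, k) ∈ B := by simp [hB, hjk, hs]
    have hBne : B.Nonempty := ⟨(j, k), hmem⟩
    calc ε ≤ εe := min_le_right _ _
      _ = B.inf' hBne (fun p => (x p.1 + x p.2 - 1)/2) := by rw [hεe, dif_pos hBne]
      _ ≤ (x j + x k - 1)/2 := Finset.inf'_le _ hmem
  set y : V → ℝ := fun j => x j + ε * d j with hy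
  set z : V → ℝ := fun j => x j - ε * d j with hz
  have hedgegen : ∀ s : ℝ, -1 ≤ s → s ≤ 1 → ∀ ⦃j k : V⦄, G.Adj j k →
      1 ≤ (x j + s * (ε * d j)) + (x k + s * (ε * d k)) := by
    intro s hs1 hs2 j k hjk
    have hsum := hedge hjk
    by_cases hsd : d j + d k = 0
    · have h6 : s * (ε * d j) + s * (ε * d k) = s * ε * (d j + d k) := by ring
      rw [hsd, mul_zero] at h6
      linarith
    · have h3 := hεedge j k hjk hsd
      have hbj := hbd j
      have hbk := hbd k
      have hp1 : (0:ℝ) ≤ (1 + s) * (2 + (d j + d k)) :=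
        mul_nonneg (by linarith) (by linarith)
      have hp2 : (0:ℝ) ≤ (1 - s) * (2 - (d j + d k)) :=
        mul_nonneg (by linarith) (by linarith)
      have h4 : -2 ≤ s * (d j + d k) := by nlinarith
      have h5 : ε * (-2) ≤ ε * (s * (d j + d k)) :=
        mul_le_mul_of_nonneg_left h4 hεpos.le
      have h6 : s * (ε * d j) + s * (ε * d k) = ε * (s * (d j + d k)) := by ring
      linarith
  have hnngen : ∀ s : ℝ, -1 ≤ s → s ≤ 1 → ∀ j, 0 ≤ x j + s * (ε * d j) := by
    intro s hs1 hs2 j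
    by_cases hj : d j = 0
    · simp [hj, hnn j]
    · have h1 := hεle j hj
      have h2 := hbd j
      have hp1 : (0:ℝ) ≤ (1 + s) * (1 + d j) := mul_nonneg (by linarith) (by linarith)
      have hp2 : (0:ℝ) ≤ (1 - s) * (1 - d j) := mul_nonneg (by linarith) (by linarith)
      have h4 : -1 ≤ s * d j := by nlinarith
      have h5 : ε * (-1) ≤ ε * (s * d j) := mul_le_mul_of_nonneg_left h4 hεpos.le
      have h6 : s * (ε * d j) = ε * (s * d j) := by ring
      linarith
  have hymem : y ∈ {y : V → ℝ | (∀ i : V, 0 ≤ y i) ∧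
      ∀ ⦃i j : V⦄, G.Adj i j → 1 ≤ y i + y j} := by
    constructor
    · intro j
      have := hnngen 1 (by norm_num) le_rfl j
      simp only [hy]; linarith
    · intro j k hjk
      have := hedgegen 1 (by norm_num) le_rfl hjk
      simp only [hy]; linarith
  have hzmem : z ∈ {y : V → ℝ | (∀ i : V, 0 ≤ y i) ∧
      ∀ ⦃i j : V⦄, G.Adj i j → 1 ≤ y i + y j} := by
    constructor
    · intro j
      have := hnngen (-1) le_rfl (by norm_num) j
      simp only [hz]; linarith
    · intro j k hjk
      have := hedgegen (-1) le_rfl (by norm_num) hjk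
      simp only [hz]; linarith
  have hseg : x ∈ openSegment ℝ y z := by
    refine ⟨1/2, 1/2, by norm_num, by norm_num, by norm_num, ?_⟩
    funext j
    simp only [Pi.add_apply, Pi.smul_apply, smul_eq_mul, hy, hz]
    ring
  have heq := (hext hymem hzmem hseg)
  have := congrFun heq i
  simp only [hy] at this
  have : ε * d i = 0 := by linarith
  rcases mul_eq_zero.mp this with h | h
  · exact absurd h hεpos.ne'
  · exact hdi h
end
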